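/- arXiv:1611.01313 — 2 statements merged into one kernel-verified Lean document; each statement's English description precedes it below -/
import Mathlib

section
/- Let E be a free abelian group, I a subgroup of E, and A = E/I. Then the cokernel of the natural map I ⊗ E → ⊗̃²(E) (the composite of the inclusion-induced map I ⊗ E → E ⊗ E with the projection E ⊗ E → ⊗̃²(E)) is naturally isomorphic to the antisymmetric square ⊗̃²(A). -/
open TensorProduct

/-- the subgroup of `A ⊗ A` generated by the elements `a⊗b + b⊗a` -/
noncomputable def antisymRel (A : Type) [AddCommGroup A] :
    Submodule ℤ (A ⊗[ℤ] A) :=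
  Submodule.span ℤ {x | ∃ a b : A, x = a ⊗ₜ[ℤ] b + b ⊗ₜ[ℤ] a}

/-- the antisymmetric square `⊗̃²(A) = (A ⊗ A)/⟨a⊗b + b⊗a⟩` -/
noncomputable abbrev AntisymSq (A : Type) [AddCommGroup A] :=
  (A ⊗[ℤ] A) ⧸ antisymRel A

/-- the natural map `I ⊗ E → ⊗̃²(E)` -/
noncomputable def toAntisym (E : Type) [AddCommGroup E]
    (I : Submodule ℤ E) : (↥I ⊗[ℤ] E) →ₗ[ℤ] AntisymSq E :=
  (antisymRel E).mkQ ∘ₗ TensorProduct.map I.subtype LinearMap.id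

/-- part of Lemma 2.6: for a free abelian group `E` and a subgroup
`I ≤ E` with `A = E/I`, the cokernel of `I ⊗ E → ⊗̃²(E)` is naturally isomorphic
to `⊗̃²(A)`. -/
theorem cokernel_toAntisym (E : Type) [AddCommGroup E]
    [Module.Free ℤ E] (I : Submodule ℤ E) :
    Nonempty ((AntisymSq E ⧸ LinearMap.range (toAntisym E I)) ≃ₗ[ℤ]
      AntisymSq (E ⧸ I)) := by
  set A := E ⧸ I
  set f : (E ⊗[ℤ] E) →ₗ[ℤ] (A ⊗[ℤ] A) := TensorProduct.map I.mkQ I.mkQ with hf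
  set J : Submodule ℤ (E ⊗[ℤ] E) :=
    LinearMap.range (TensorProduct.map I.subtype LinearMap.id) with hJ
  set J' : Submodule ℤ (E ⊗[ℤ] E) :=
    LinearMap.range (TensorProduct.map LinearMap.id I.subtype) with hJ'
  set R : Submodule ℤ (E ⊗[ℤ] E) := antisymRel E with hR
  -- kernel of f
  have hfeq : f = (TensorProduct.quotientTensorQuotientEquiv I I).symm.toLinearMap
      ∘ₗ (J ⊔ J').mkQ := by
    ext x y
    rfl
  have hker : LinearMap.ker f = J ⊔ J' := by
    rw [hfeq]
    erw [LinearMap.ker_comp, LinearEquiv.ker, Submodule.comap_bot, Submodule.ker_mkQ]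
  -- J' ≤ R ⊔ J
  have hJ'le : J' ≤ R ⊔ J := by
    rintro x ⟨t, rfl⟩
    induction t using TensorProduct.induction_on with
    | zero => erw [map_zero]; exact zero_mem _
    | tmul e i =>
        have h1 : e ⊗ₜ[ℤ] (i : E) + (i : E) ⊗ₜ[ℤ] e ∈ R :=
          Submodule.subset_span ⟨e, i, rfl⟩
        have h2 : (i : E) ⊗ₜ[ℤ] e ∈ J := ⟨i ⊗ₜ e, rfl⟩
        have : (TensorProduct.map LinearMap.id I.subtype) (e ⊗ₜ i) =
            (e ⊗ₜ[ℤ] (i : E) + (i : E) ⊗ₜ[ℤ] e) - (i : E) ⊗ₜ[ℤ] e := by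
          simp
        erw [this]
        exact sub_mem (Submodule.mem_sup_left h1) (Submodule.mem_sup_right h2)
    | add u v hu hv =>
        erw [map_add]; exact add_mem hu hv
  have hkerle : LinearMap.ker f ≤ R ⊔ J := by
    rw [hker]
    exact sup_le le_sup_right hJ'le
  -- f maps R onto antisymRel A
  have hRle : R ≤ Submodule.comap f (antisymRel A) := by
    rw [hR, antisymRel, Submodule.span_le]
    rintro x ⟨a, b, rfl⟩
    refine Submodule.subset_span ?_
    exact ⟨I.mkQ a, I.mkQ b, rfl⟩
  have hRA : antisymRel A ≤ Submodule.map f R := by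
    rw [antisymRel, Submodule.span_le]
    rintro x ⟨a, b, rfl⟩
    obtain ⟨a', rfl⟩ := I.mkQ_surjective a
    obtain ⟨b', rfl⟩ := I.mkQ_surjective b
    exact ⟨a' ⊗ₜ b' + b' ⊗ₜ a', Submodule.subset_span ⟨a', b', rfl⟩, rfl⟩
  have hle : R ⊔ J ≤ Submodule.comap f (antisymRel A) := by
    refine sup_le hRle ?_
    refine le_trans ?_ (Submodule.comap_mono (bot_le : ⊥ ≤ antisymRel A))
    rw [Submodule.comap_bot, hker]
    exact le_sup_left
  -- induced map on quotients
  set g := Submodule.mapQ (R ⊔ J) (antisymRel A) f hle with hg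
  have hgsurj : Function.Surjective g := by
    have hfsurj : Function.Surjective f :=
      TensorProduct.map_surjective I.mkQ_surjective I.mkQ_surjective
    intro x
    obtain ⟨y, rfl⟩ := Submodule.Quotient.mk_surjective _ x
    obtain ⟨z, rfl⟩ := hfsurj y
    exact ⟨Submodule.Quotient.mk z, by simp [g, Submodule.mapQ_apply]⟩
  have hginj : Function.Injective g := by
    rw [← LinearMap.ker_eq_bot, LinearMap.ker_eq_bot']
    intro x hx
    obtain ⟨y, rfl⟩ := Submodule.Quotient.mk_surjective _ x
    rw [hg, Submodule.mapQ_apply, Submodule.Quotient.mk_eq_zero] at hx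
    obtain ⟨r, hrR, hrf⟩ := hRA hx
    have : y - r ∈ LinearMap.ker f := by
      simp [LinearMap.mem_ker, map_sub, hrf]
    have hy : y ∈ R ⊔ J := by
      have := hkerle this
      have hr : r ∈ R ⊔ J := Submodule.mem_sup_left hrR
      simpa using add_mem this hr
    simpa [Submodule.Quotient.mk_eq_zero] using hy
  -- assemble
  have hrange : LinearMap.range (toAntisym E I) = Submodule.map R.mkQ J := by
    rw [toAntisym]
    erw [LinearMap.range_comp]
    rfl
  have e1 : (AntisymSq E ⧸ LinearMap.range (toAntisym E I)) ≃ₗ[ℤ]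
      ((E ⊗[ℤ] E) ⧸ (R ⊔ J)) := by
    rw [hrange]
    exact Submodule.quotientQuotientEquivQuotientSup R J
  exact ⟨e1.trans (LinearEquiv.ofBijective g ⟨hginj, hgsurj⟩)⟩
end

section
/- Let F be a free group with normal subgroups R and S. Let r₁, …, r_k ∈ R and t₁, …, t_k ∈ R∩S be elements such that the product [r₁,t₁][r₂,t₂]⋯[r_k,t_k] = 1 in F. Then for any d, e ∈ S, the element w := ∏ᵢ [[rᵢ⁻¹, d], [tᵢ, e]] (product taken in order i = 1,…,k) satisfies w − 1 ∈ Δ(R)Δ(S)Δ(F) in ℤ[F]. -/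
/-! Group-ring preliminaries: for a subgroup `N` of `F`, `aug N` is the additive
subgroup `Δ(N)` of `ℤ[F]` generated by `{n - 1 : n ∈ N}`, and `augI N = Δ(N)ℤ[F]`
is the corresponding (for normal `N` two-sided) ideal of `ℤ[F]`.  Products of
submodules are additive spans of products, as in the paper. -/

/-- the augmentation ideal `Δ(N)` of a subgroup `N ≤ F`, inside `ℤ[F]` -/
noncomputable def aug {F : Type} [Group F] (N : Subgroup F) :
    Submodule ℤ (MonoidAlgebra ℤ F) :=
  Submodule.span ℤ {x | ∃ n ∈ N, x = (MonoidAlgebra.of ℤ F n) - 1}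

/-- the ideal `𝐧 = Δ(N)ℤ[F]` of `ℤ[F]` -/
noncomputable def augI {F : Type} [Group F] (N : Subgroup F) :
    Submodule ℤ (MonoidAlgebra ℤ F) :=
  aug N * ⊤

/-- the commutator `[x,y] = x⁻¹y⁻¹xy` (convention of the paper) -/
def pcomm {F : Type} [Group F] (x y : F) : F := x⁻¹ * y⁻¹ * x * y

namespace PropW

set_option linter.unusedSectionVars false

variable {F : Type} [Group F]

noncomputable abbrev o (x : F) : MonoidAlgebra ℤ F := MonoidAlgebra.of ℤ F x

lemma o_mul (x y : F) : o (x * y) = o x * o y := map_mul _ _ _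

lemma o_one : (o (1 : F)) = 1 := map_one _

lemma sub_one_mem {N : Subgroup F} {x : F} (hx : x ∈ N) : o x - 1 ∈ aug N :=
  Submodule.subset_span ⟨x, hx, rfl⟩

lemma conj_sub (g x : F) : o g * (o x - 1) = (o (g * x * g⁻¹) - 1) * o g := by
  simp only [mul_sub, sub_mul, one_mul, mul_one, ← o_mul, inv_mul_cancel_right]

lemma inv_sub (x : F) : o x⁻¹ * (o x - 1) = -(o x⁻¹ - 1) := by
  simp only [mul_sub, mul_one, ← o_mul, inv_mul_cancel, o_one]
  exact (neg_sub _ _).symm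

lemma conjL {N : Subgroup F} [N.Normal] {x : F} (hx : x ∈ N) (g : F) :
    g * x * g⁻¹ ∈ N := ‹N.Normal›.conj_mem x hx g

lemma conjR {N : Subgroup F} [N.Normal] {x : F} (hx : x ∈ N) (g : F) :
    g⁻¹ * x * g ∈ N := by simpa using conjL hx g⁻¹

lemma mul_sub_one_mem_top (y : MonoidAlgebra ℤ F) (g : F) :
    y * (o g - 1) ∈ aug (⊤ : Subgroup F) := by
  induction y using MonoidAlgebra.induction_on with
  | of h =>
      have : o h * (o g - 1) = (o (h * g) - 1) - (o h - 1) := by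
        simp only [mul_sub, mul_one, ← o_mul]; abel
      rw [this]
      exact sub_mem (sub_one_mem trivial) (sub_one_mem trivial)
  | add f f' hf hf' => rw [add_mul]; exact add_mem hf hf'
  | smul r f hf => rw [smul_mul_assoc]; exact Submodule.smul_mem _ _ hf

lemma aug_top_mul_og {x : MonoidAlgebra ℤ F} (hx : x ∈ aug (⊤ : Subgroup F)) (g : F) :
    x * o g ∈ aug (⊤ : Subgroup F) := by
  induction hx using Submodule.span_induction with
  | mem w hw =>
      obtain ⟨n, -, rfl⟩ := hw
      have : (o n - 1) * o g = (o (n * g) - 1) - (o g - 1) := by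
        simp only [sub_mul, one_mul, ← o_mul]; abel
      rw [this]; exact sub_mem (sub_one_mem trivial) (sub_one_mem trivial)
  | zero => rw [zero_mul]; exact zero_mem _
  | add a b _ _ ha hb => rw [add_mul]; exact add_mem ha hb
  | smul r a _ ha => rw [smul_mul_assoc]; exact Submodule.smul_mem _ _ ha

noncomputable def κ (g : F) : MonoidAlgebra ℤ F ≃ₐ[ℤ] MonoidAlgebra ℤ F :=
  MonoidAlgebra.domCongr ℤ ℤ (MulAut.conj g)

lemma κ_o (g x : F) : κ g (o x) = o (g * x * g⁻¹) := by
  simp [κ, MonoidAlgebra.of_apply, MulAut.conj_apply]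

lemma og_mul_eq (g : F) (y : MonoidAlgebra ℤ F) : o g * y = κ g y * o g := by
  induction y using MonoidAlgebra.induction_on with
  | of h => rw [κ_o, ← o_mul, ← o_mul]; congr 1; group
  | add f f' hf hf' => rw [mul_add, map_add, add_mul, hf, hf']
  | smul r f hf => rw [mul_smul_comm, map_smul, smul_mul_assoc, hf]

lemma κ_aug {N : Subgroup F} [N.Normal] (g : F) {x : MonoidAlgebra ℤ F}
    (hx : x ∈ aug N) : κ g x ∈ aug N := by
  induction hx using Submodule.span_induction with
  | mem w hw =>
      obtain ⟨n, hn, rfl⟩ := hw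
      rw [map_sub, map_one, κ_o]
      exact sub_one_mem (conjL hn g)
  | zero => rw [map_zero]; exact zero_mem _
  | add a b _ _ ha hb => rw [map_add]; exact add_mem ha hb
  | smul r a _ ha => rw [map_smul]; exact Submodule.smul_mem _ _ ha

section Ideals

variable (R S : Subgroup F) [R.Normal] [S.Normal]

noncomputable abbrev MM : Submodule ℤ (MonoidAlgebra ℤ F) :=
  aug R * aug S * aug (⊤ : Subgroup F)

noncomputable abbrev JJ : Submodule ℤ (MonoidAlgebra ℤ F) :=
  aug R * aug S * (⊤ : Submodule ℤ (MonoidAlgebra ℤ F))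

variable {R S}

lemma mem_AB {x y : F} (hx : x ∈ R) (hy : y ∈ S) :
    (o x - 1) * (o y - 1) ∈ aug R * aug S :=
  Submodule.mul_mem_mul (sub_one_mem hx) (sub_one_mem hy)

lemma mem_MM {x y : F} (hx : x ∈ R) (hy : y ∈ S) (z : F) :
    (o x - 1) * (o y - 1) * (o z - 1) ∈ MM R S :=
  Submodule.mul_mem_mul (mem_AB hx hy) (sub_one_mem trivial)

lemma MM_mul_og {x : MonoidAlgebra ℤ F} (hx : x ∈ MM R S) (g : F) :
    x * o g ∈ MM R S := by
  refine Submodule.mul_induction_on hx (fun a ha b hb => ?_) (fun p q hp hq => ?_)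
  · rw [mul_assoc]; exact Submodule.mul_mem_mul ha (aug_top_mul_og hb g)
  · rw [add_mul]; exact add_mem hp hq

lemma κ_AB (g : F) {x : MonoidAlgebra ℤ F} (hx : x ∈ aug R * aug S) :
    κ g x ∈ aug R * aug S := by
  refine Submodule.mul_induction_on hx (fun a ha b hb => ?_) (fun p q hp hq => ?_)
  · rw [map_mul]; exact Submodule.mul_mem_mul (κ_aug g ha) (κ_aug g hb)
  · rw [map_add]; exact add_mem hp hq

lemma κ_MM (g : F) {x : MonoidAlgebra ℤ F} (hx : x ∈ MM R S) : κ g x ∈ MM R S := by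
  refine Submodule.mul_induction_on hx (fun a ha b hb => ?_) (fun p q hp hq => ?_)
  · rw [map_mul]; exact Submodule.mul_mem_mul (κ_AB g ha) (κ_aug g hb)
  · rw [map_add]; exact add_mem hp hq

lemma og_mul_MM {x : MonoidAlgebra ℤ F} (hx : x ∈ MM R S) (g : F) :
    o g * x ∈ MM R S := by
  rw [og_mul_eq]; exact MM_mul_og (κ_MM g hx) g

lemma JJ_mul {x : MonoidAlgebra ℤ F} (hx : x ∈ JJ R S) (y : MonoidAlgebra ℤ F) :
    x * y ∈ JJ R S := by
  refine Submodule.mul_induction_on hx (fun a ha b _ => ?_) (fun p q hp hq => ?_)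
  · rw [mul_assoc]; exact Submodule.mul_mem_mul ha trivial
  · rw [add_mul]; exact add_mem hp hq

lemma κ_JJ (g : F) {x : MonoidAlgebra ℤ F} (hx : x ∈ JJ R S) : κ g x ∈ JJ R S := by
  refine Submodule.mul_induction_on hx (fun a ha b _ => ?_) (fun p q hp hq => ?_)
  · rw [map_mul]; exact Submodule.mul_mem_mul (κ_AB g ha) trivial
  · rw [map_add]; exact add_mem hp hq

lemma og_mul_JJ {x : MonoidAlgebra ℤ F} (hx : x ∈ JJ R S) (g : F) :
    o g * x ∈ JJ R S := by
  rw [og_mul_eq]; exact JJ_mul (κ_JJ g hx) _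

lemma AB_le_JJ {x : MonoidAlgebra ℤ F} (hx : x ∈ aug R * aug S) : x ∈ JJ R S := by
  have := Submodule.mul_mem_mul hx (Submodule.mem_top (x := (1 : MonoidAlgebra ℤ F)))
  rwa [mul_one] at this

lemma JJ_mul_sub_one {x : MonoidAlgebra ℤ F} (hx : x ∈ JJ R S) (g : F) :
    x * (o g - 1) ∈ MM R S := by
  refine Submodule.mul_induction_on hx (fun a ha b _ => ?_) (fun p q hp hq => ?_)
  · rw [mul_assoc]; exact Submodule.mul_mem_mul ha (mul_sub_one_mem_top b g)
  · rw [add_mul]; exact add_mem hp hq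

end Ideals

section Core

variable {R S : Subgroup F} [R.Normal] [S.Normal]

/-- the commutator factor `[[r⁻¹,d],[t,e]]` -/
def cW (d e : F) (p : F × F) : F := pcomm (pcomm p.1⁻¹ d) (pcomm p.2 e)

/-- the correction element `ν` -/
def νW (d e : F) (p : F × F) : F :=
  (pcomm p.1⁻¹ d)⁻¹ * (pcomm p.2 e)⁻¹ * (pcomm p.1⁻¹ d) * (p.1⁻¹ * pcomm p.2 e * p.1)

/-- the accumulated correction element -/
def TF (d e : F) : F → List (F × F) → F
  | _, [] => 1
  | W, p :: L => (W * νW d e p * W⁻¹) * TF d e (W * cW d e p) L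

lemma pcomm_mem_left {N : Subgroup F} [N.Normal] {x : F} (hx : x ∈ N) (y : F) :
    pcomm x y ∈ N := by
  have h : pcomm x y = x⁻¹ * (y⁻¹ * x * y) := by simp [pcomm, mul_assoc]
  rw [h]; exact mul_mem (inv_mem hx) (conjR hx y)

lemma pcomm_mem_right {N : Subgroup F} [N.Normal] {y : F} (hy : y ∈ N) (x : F) :
    pcomm x y ∈ N := by
  have h : pcomm x y = (x⁻¹ * y⁻¹ * x) * y := by simp [pcomm, mul_assoc]
  rw [h]
  exact mul_mem (conjR (inv_mem hy) x) hy

lemma a_mem_R {r : F} (hr : r ∈ R) (d : F) : pcomm r⁻¹ d ∈ R :=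
  pcomm_mem_left (inv_mem hr) d

lemma a_mem_S {d : F} (hd : d ∈ S) (r : F) : pcomm r⁻¹ d ∈ S :=
  pcomm_mem_right hd r⁻¹

lemma b_mem_R {t : F} (ht : t ∈ R) (e : F) : pcomm t e ∈ R :=
  pcomm_mem_left ht e

lemma b_mem_S {e : F} (he : e ∈ S) (t : F) : pcomm t e ∈ S :=
  pcomm_mem_right he t

lemma ν_mem_R {d e : F} {p : F × F} (hp1 : p.1 ∈ R) (hp2 : p.2 ∈ R) :
    νW d e p ∈ R := by
  refine mul_mem (mul_mem (mul_mem (inv_mem (a_mem_R hp1 d))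
    (inv_mem (b_mem_R hp2 e))) (a_mem_R hp1 d)) ?_
  simpa using conjR (b_mem_R hp2 e) p.1

lemma ν_mem_S {d e : F} (hd : d ∈ S) (he : e ∈ S) (p : F × F) :
    νW d e p ∈ S := by
  refine mul_mem (mul_mem (mul_mem (inv_mem (a_mem_S hd p.1))
    (inv_mem (b_mem_S he p.2))) (a_mem_S hd p.1)) ?_
  simpa using conjR (b_mem_S he p.2) p.1

lemma c_mem_R {d e : F} {p : F × F} (hp2 : p.2 ∈ R) : cW d e p ∈ R :=
  pcomm_mem_right (b_mem_R hp2 e) _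

lemma c_mem_S {d e : F} (he : e ∈ S) (p : F × F) : cW d e p ∈ S :=
  pcomm_mem_right (b_mem_S he p.2) _

lemma TF_mem_R {d e : F} (hd : d ∈ S) : ∀ (L : List (F × F)) (W : F),
    (∀ p ∈ L, p.1 ∈ R ∧ p.2 ∈ R) → TF d e W L ∈ R
  | [], W, _ => one_mem R
  | p :: L, W, h => by
    rw [TF]
    have hp := h p (List.mem_cons_self)
    exact mul_mem (conjL (ν_mem_R hp.1 hp.2) W)
      (TF_mem_R hd L _ fun q hq => h q (List.mem_cons_of_mem p hq))

lemma TF_mem_S {d e : F} (hd : d ∈ S) (he : e ∈ S) : ∀ (L : List (F × F)) (W : F),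
    TF d e W L ∈ S
  | [], W => one_mem S
  | p :: L, W => by
    rw [TF]
    exact mul_mem (conjL (ν_mem_S hd he p) W) (TF_mem_S hd he L _)

set_option maxHeartbeats 1000000 in
/-- the KEY ring identity for CORE -/
lemma coreId (r t W d e : F) :
    o W * (o (pcomm (pcomm r⁻¹ d) (pcomm t e)) - 1)
      - (o (W * ((pcomm r⁻¹ d)⁻¹ * (pcomm t e)⁻¹ * (pcomm r⁻¹ d) * (r⁻¹ * pcomm t e * r)) * W⁻¹) - 1) * (o d - 1)
    = -(o (W * (pcomm r⁻¹ d)⁻¹) * ((o (pcomm t e)⁻¹ - 1) * (o (r * d⁻¹ * r⁻¹) - 1) * (o r - 1)))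
      + o (W * (pcomm r⁻¹ d)⁻¹) * ((o (pcomm r⁻¹ d * r⁻¹) - 1) * (o (pcomm t e)⁻¹ - 1) * (o (r * d * r⁻¹) - 1) * o (r * d⁻¹))
      + (o (W * ((pcomm r⁻¹ d)⁻¹ * (pcomm t e)⁻¹ * (pcomm r⁻¹ d) * (r⁻¹ * pcomm t e * r)) * W⁻¹) - 1) * (o (W * r⁻¹ * (pcomm t e)⁻¹ * r * d⁻¹) - 1) * (o d - 1)
      + -(o (W * (pcomm r⁻¹ d)⁻¹ * (pcomm t e)⁻¹) * ((o (pcomm r⁻¹ d) - 1) * (o (t⁻¹ * e⁻¹ * t) - 1) * (o t⁻¹ - 1)))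
      + o (W * (pcomm r⁻¹ d)⁻¹ * (pcomm t e)⁻¹) * ((o (pcomm r⁻¹ d) - 1) * (o (pcomm t e * t) - 1) * (o (t⁻¹ * e * t) - 1) * o (t⁻¹ * e⁻¹)) := by
  simp only [pcomm, mul_inv_rev, inv_inv, mul_sub, sub_mul, one_mul, mul_one, ← o_mul]
  simp only [mul_assoc, inv_mul_cancel_left, mul_inv_cancel_left, inv_mul_cancel,
    mul_inv_cancel, o_one, mul_one, one_mul]
  abel

/-- CORE : the single-factor reduction -/
lemma CORE {d e r t W : F} (hd : d ∈ S) (he : e ∈ S) (hr : r ∈ R) (htR : t ∈ R)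
    (htS : t ∈ S) (hW : W ∈ S) :
    o W * (o (cW d e (r, t)) - 1)
      - (o (W * νW d e (r, t) * W⁻¹) - 1) * (o d - 1) ∈ MM R S := by
  have hbR : pcomm t e ∈ R := b_mem_R htR e
  have hbS : pcomm t e ∈ S := b_mem_S he t
  have hμR : W * νW d e (r, t) * W⁻¹ ∈ R :=
    conjL (ν_mem_R (p := (r, t)) hr htR) W
  show o W * (o (pcomm (pcomm r⁻¹ d) (pcomm t e)) - 1)
      - (o (W * ((pcomm r⁻¹ d)⁻¹ * (pcomm t e)⁻¹ * (pcomm r⁻¹ d) * (r⁻¹ * pcomm t e * r)) * W⁻¹) - 1) * (o d - 1) ∈ MM R S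
  rw [coreId]
  refine add_mem (add_mem (add_mem (add_mem (neg_mem ?_) ?_) ?_) (neg_mem ?_)) ?_
  · exact og_mul_MM (mem_MM (inv_mem hbR) (conjL (inv_mem hd) r) r) _
  · exact og_mul_MM (MM_mul_og (mem_MM (mul_mem (a_mem_R hr d) (inv_mem hr))
      (inv_mem hbS) _) _) _
  · refine mem_MM hμR ?_ d
    have hh : W * r⁻¹ * (pcomm t e)⁻¹ * r * d⁻¹
        = (W * (r⁻¹ * (pcomm t e)⁻¹ * r)) * d⁻¹ := by group
    rw [hh]
    exact mul_mem (mul_mem hW (conjR (inv_mem hbS) r)) (inv_mem hd)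
  · exact og_mul_MM (mem_MM (a_mem_R hr d) (conjR (inv_mem he) t) t⁻¹) _
  · exact og_mul_MM (MM_mul_og (mem_MM (a_mem_R hr d) (mul_mem hbS htS) _) _) _

end Core
section Main

variable {R S : Subgroup F} [R.Normal] [S.Normal]

lemma stepId (A C Pr N T D : MonoidAlgebra ℤ F) :
    A * (C * Pr - 1) - (N * T - 1) * (D - 1)
    = (A * C * (Pr - 1) - (T - 1) * (D - 1)) + (A * (C - 1) - (N - 1) * (D - 1))
      + -((N - 1) * ((T - 1) * (D - 1))) := by noncomm_ring

lemma MAIN {d e : F} (hd : d ∈ S) (he : e ∈ S) :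
    ∀ (L : List (F × F)) (W : F), W ∈ S → (∀ p ∈ L, p.1 ∈ R ∧ p.2 ∈ R ⊓ S) →
    o W * (o ((L.map (cW d e)).prod) - 1) - (o (TF d e W L) - 1) * (o d - 1) ∈ MM R S
  | [], W, _, _ => by
      simp only [List.map_nil, List.prod_nil, TF, o_one, sub_self, mul_zero, zero_mul,
        sub_zero]
      exact zero_mem _
  | ⟨r, t⟩ :: L, W, hW, hmem => by
    obtain ⟨hp1, hp2⟩ := hmem (r, t) (List.mem_cons_self)
    obtain ⟨hp2R, hp2S⟩ := Subgroup.mem_inf.mp hp2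
    have hcS : cW d e (r, t) ∈ S := c_mem_S he (r, t)
    have IH := MAIN hd he L (W * cW d e (r, t)) (mul_mem hW hcS)
      (fun q hq => hmem q (List.mem_cons_of_mem _ hq))
    rw [o_mul] at IH
    have CO := CORE (R := R) (S := S) hd he hp1 hp2R hp2S hW
    have X3 : (o (W * νW d e (r, t) * W⁻¹) - 1)
        * ((o (TF d e (W * cW d e (r, t)) L) - 1) * (o d - 1)) ∈ MM R S := by
      have := mem_MM (R := R) (S := S) (conjL (ν_mem_R (d := d) (e := e) (p := (r, t)) hp1 hp2R) W)
        (TF_mem_S hd he L (W * cW d e (r, t))) d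
      simpa [mul_assoc] using this
    rw [List.map_cons, List.prod_cons, TF, o_mul, o_mul, stepId]
    exact add_mem (add_mem IH CO) (neg_mem X3)

end Main
section GroupPart

variable (R S : Subgroup F) [R.Normal] [S.Normal] (d e : F)

/-- class in the abelianization of `R ⊓ S` -/
noncomputable def fH (x : F) (hx : x ∈ R ⊓ S) : Abelianization ↥(R ⊓ S) :=
  Abelianization.of (⟨x, hx⟩ : ↥(R ⊓ S))

variable {R S}

lemma fH_eq {x y : F} (h : x = y) (hx : x ∈ R ⊓ S) :
    fH R S x hx = fH R S y (h ▸ hx) := by subst h; rfl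

lemma fH_mul {x y : F} (hx : x ∈ R ⊓ S) (hy : y ∈ R ⊓ S) :
    fH R S (x * y) (mul_mem hx hy) = fH R S x hx * fH R S y hy := by
  unfold fH
  rw [show (⟨x * y, mul_mem hx hy⟩ : ↥(R ⊓ S)) = ⟨x, hx⟩ * ⟨y, hy⟩ from rfl, map_mul]

lemma fH_inv {x : F} (hx : x ∈ R ⊓ S) :
    fH R S x⁻¹ (inv_mem hx) = (fH R S x hx)⁻¹ := by
  unfold fH
  rw [show (⟨x⁻¹, inv_mem hx⟩ : ↥(R ⊓ S)) = (⟨x, hx⟩ : ↥(R ⊓ S))⁻¹ from rfl, map_inv]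

lemma fH_one : fH R S 1 (one_mem _) = 1 := map_one _

lemma fH_conj {h x : F} (hh : h ∈ R ⊓ S) (hx : x ∈ R ⊓ S) :
    fH R S (h * x * h⁻¹) (mul_mem (mul_mem hh hx) (inv_mem hh)) = fH R S x hx := by
  rw [fH_mul (mul_mem hh hx) (inv_mem hh), fH_mul hh hx, fH_inv hh]
  rw [mul_comm (fH R S h hh) (fH R S x hx), mul_assoc, mul_inv_cancel, mul_one]

/-- arbitrary membership versions -/
lemma fH_mul' {x y : F} (hx : x ∈ R ⊓ S) (hy : y ∈ R ⊓ S) (hxy : x * y ∈ R ⊓ S) :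
    fH R S (x * y) hxy = fH R S x hx * fH R S y hy := fH_mul hx hy

lemma fH_inv' {x : F} (hx : x ∈ R ⊓ S) (hxi : x⁻¹ ∈ R ⊓ S) :
    fH R S x⁻¹ hxi = (fH R S x hx)⁻¹ := fH_inv hx

lemma fH_conj' {h x : F} (hh : h ∈ R ⊓ S) (hx : x ∈ R ⊓ S) (hc : h * x * h⁻¹ ∈ R ⊓ S) :
    fH R S (h * x * h⁻¹) hc = fH R S x hx := fH_conj hh hx

variable (R S) in
/-- the `e`-twisted class -/
noncomputable def gH (x : F) (hx : x ∈ R ⊓ S) : Abelianization ↥(R ⊓ S) :=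
  fH R S (e⁻¹ * x * e) (conjR hx e)

lemma gH_eq {x y : F} (h : x = y) (hx : x ∈ R ⊓ S) :
    gH R S e x hx = gH R S e y (h ▸ hx) := by subst h; rfl

lemma gH_mul {x y : F} (hx : x ∈ R ⊓ S) (hy : y ∈ R ⊓ S) (hxy : x * y ∈ R ⊓ S) :
    gH R S e (x * y) hxy = gH R S e x hx * gH R S e y hy := by
  unfold gH
  rw [fH_eq (show e⁻¹ * (x * y) * e = (e⁻¹ * x * e) * (e⁻¹ * y * e) by group)]
  exact fH_mul' (conjR hx e) (conjR hy e) _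

lemma gH_inv {x : F} (hx : x ∈ R ⊓ S) (hxi : x⁻¹ ∈ R ⊓ S) :
    gH R S e x⁻¹ hxi = (gH R S e x hx)⁻¹ := by
  unfold gH
  rw [fH_eq (show e⁻¹ * x⁻¹ * e = (e⁻¹ * x * e)⁻¹ by group)]
  exact fH_inv' (conjR hx e) _

lemma gH_one : gH R S e (1 : F) (one_mem _) = 1 := by
  unfold gH
  rw [fH_eq (show e⁻¹ * 1 * e = 1 by group)]
  exact fH_one

end GroupPart
section Bridge

variable {R S : Subgroup F} [R.Normal] [S.Normal] {d e : F}

lemma bridge {r x : F} (hq : r⁻¹ * e⁻¹ * r * e ∈ R ⊓ S) (hx : x ∈ R ⊓ S)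
    (hm1 : r⁻¹ * e⁻¹ * x * e * r ∈ R ⊓ S) (hm2 : r⁻¹ * x * r ∈ R ⊓ S) :
    fH R S (r⁻¹ * e⁻¹ * x * e * r) hm1 = gH R S e (r⁻¹ * x * r) hm2 := by
  unfold gH
  rw [fH_eq (show r⁻¹ * e⁻¹ * x * e * r
    = (r⁻¹ * e⁻¹ * r * e) * (e⁻¹ * (r⁻¹ * x * r) * e) * (r⁻¹ * e⁻¹ * r * e)⁻¹ by group)]
  exact fH_conj' hq (conjR hm2 e) _

lemma phi_nu {r t : F} (hd : d ∈ S) (he : e ∈ S) (hr : r ∈ R) (ht : t ∈ R ⊓ S)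
    (hν : νW d e (r, t) ∈ R ⊓ S) (hγ : pcomm r t ∈ R ⊓ S) :
    fH R S (νW d e (r, t)) hν
      = fH R S (pcomm r t) hγ * (gH R S e (pcomm r t) hγ)⁻¹ := by
  obtain ⟨htR, htS⟩ := Subgroup.mem_inf.mp ht
  have hA : pcomm r⁻¹ d ∈ R ⊓ S :=
    Subgroup.mem_inf.mpr ⟨a_mem_R hr d, a_mem_S hd r⟩
  have hB : pcomm t e ∈ R ⊓ S :=
    Subgroup.mem_inf.mpr ⟨b_mem_R htR e, b_mem_S he t⟩
  have hu : r⁻¹ * t * r ∈ R ⊓ S := conjR ht r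
  have hq : r⁻¹ * e⁻¹ * r * e ∈ R ⊓ S := by
    refine Subgroup.mem_inf.mpr ⟨?_, ?_⟩
    · have hh : r⁻¹ * e⁻¹ * r * e = r⁻¹ * (e⁻¹ * r * e) := by group
      rw [hh]; exact mul_mem (inv_mem hr) (conjR hr e)
    · have hh : r⁻¹ * e⁻¹ * r * e = (r⁻¹ * e⁻¹ * r) * e := by group
      rw [hh]; exact mul_mem (conjR (inv_mem he) r) he
  have hv : r⁻¹ * e⁻¹ * t * e * r ∈ R ⊓ S := by
    have hh : r⁻¹ * e⁻¹ * t * e * r = (r⁻¹ * e⁻¹) * t * (r⁻¹ * e⁻¹)⁻¹ := by group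
    rw [hh]; exact conjL ht _
  have hBr : r⁻¹ * pcomm t e * r ∈ R ⊓ S := conjR hB r
  have hA3 : (pcomm r⁻¹ d)⁻¹ * (pcomm t e)⁻¹ * (pcomm r⁻¹ d) ∈ R ⊓ S :=
    mul_mem (mul_mem (inv_mem hA) (inv_mem hB)) hA
  -- unfold ν and decompose
  have e1 : fH R S (νW d e (r, t)) hν
      = fH R S ((pcomm r⁻¹ d)⁻¹ * (pcomm t e)⁻¹ * (pcomm r⁻¹ d)) hA3
        * fH R S (r⁻¹ * pcomm t e * r) hBr := by
    exact fH_mul' hA3 hBr hν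
  have e2 : fH R S ((pcomm r⁻¹ d)⁻¹ * (pcomm t e)⁻¹ * (pcomm r⁻¹ d)) hA3
      = (fH R S (pcomm t e) hB)⁻¹ := by
    rw [fH_mul' (mul_mem (inv_mem hA) (inv_mem hB)) hA _,
        fH_mul' (inv_mem hA) (inv_mem hB) _, fH_inv' hA (inv_mem hA), fH_inv' hB (inv_mem hB),
        mul_comm ((fH R S (pcomm r⁻¹ d) hA)⁻¹) ((fH R S (pcomm t e) hB)⁻¹),
        mul_assoc, inv_mul_cancel, mul_one]
  have e3 : fH R S (r⁻¹ * pcomm t e * r) hBr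
      = (fH R S (r⁻¹ * t * r) hu)⁻¹ * gH R S e (r⁻¹ * t * r) hu := by
    rw [fH_eq (show r⁻¹ * pcomm t e * r
      = (r⁻¹ * t * r)⁻¹ * (r⁻¹ * e⁻¹ * t * e * r) by simp [pcomm]; group)]
    rw [fH_mul' (inv_mem hu) hv _, fH_inv' hu (inv_mem hu)]
    rw [bridge hq ht hv hu]
  have e4 : fH R S (pcomm t e) hB
      = (fH R S t ht)⁻¹ * gH R S e t ht := by
    rw [fH_eq (show pcomm t e = t⁻¹ * (e⁻¹ * t * e) by simp [pcomm]; group)]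
    rw [fH_mul' (inv_mem ht) (conjR ht e) _, fH_inv' ht (inv_mem ht)]
    rfl
  have e5 : fH R S (pcomm r t) hγ
      = (fH R S (r⁻¹ * t * r) hu)⁻¹ * fH R S t ht := by
    rw [fH_eq (show pcomm r t = (r⁻¹ * t * r)⁻¹ * t by simp [pcomm]; group)]
    rw [fH_mul' (inv_mem hu) ht _, fH_inv' hu (inv_mem hu)]
  have e6 : gH R S e (pcomm r t) hγ
      = (gH R S e (r⁻¹ * t * r) hu)⁻¹ * gH R S e t ht := by
    rw [gH_eq (R := R) (S := S) (e := e)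
      (show pcomm r t = (r⁻¹ * t * r)⁻¹ * t by simp [pcomm]; group)]
    rw [gH_mul e (inv_mem hu) ht _, gH_inv e hu (inv_mem hu)]
  rw [e1, e2, e3, e4, e5, e6]
  generalize fH R S (r⁻¹ * t * r) hu = a
  generalize fH R S t ht = b
  generalize gH R S e (r⁻¹ * t * r) hu = c
  generalize gH R S e t ht = dd
  rw [mul_inv_rev, mul_inv_rev, inv_inv, inv_inv]
  -- goal : dd⁻¹ * b * (a⁻¹ * c) = a⁻¹ * b * (c * dd⁻¹)... close by comm
  simp [mul_comm, mul_left_comm, mul_assoc]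

end Bridge
section TFab

variable {R S : Subgroup F} [R.Normal] [S.Normal] {d e : F}

/-- the relation commutator -/
def γF : F × F → F := fun p => pcomm p.1 p.2

lemma γ_mem {p : F × F} (h1 : p.1 ∈ R) (h2 : p.2 ∈ R ⊓ S) : γF p ∈ R ⊓ S := by
  obtain ⟨h2R, h2S⟩ := Subgroup.mem_inf.mp h2
  exact Subgroup.mem_inf.mpr ⟨pcomm_mem_right h2R p.1, pcomm_mem_right h2S p.1⟩

lemma Γ_mem : ∀ (L : List (F × F)), (∀ p ∈ L, p.1 ∈ R ∧ p.2 ∈ R ⊓ S) →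
    (L.map γF).prod ∈ R ⊓ S
  | [], _ => by simp only [List.map_nil, List.prod_nil]; exact one_mem _
  | p :: L, h => by
    rw [List.map_cons, List.prod_cons]
    obtain ⟨h1, h2⟩ := h p (List.mem_cons_self)
    exact mul_mem (γ_mem h1 h2) (Γ_mem L fun q hq => h q (List.mem_cons_of_mem _ hq))

lemma ν_memRS (hd : d ∈ S) (he : e ∈ S) {p : F × F} (h1 : p.1 ∈ R) (h2 : p.2 ∈ R) :
    νW d e p ∈ R ⊓ S :=
  Subgroup.mem_inf.mpr ⟨ν_mem_R h1 h2, ν_mem_S hd he p⟩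

lemma c_memRS (hd : d ∈ S) (he : e ∈ S) {p : F × F} (h2 : p.2 ∈ R) :
    cW d e p ∈ R ⊓ S :=
  Subgroup.mem_inf.mpr ⟨c_mem_R h2, c_mem_S he p⟩

lemma TF_memRS (hd : d ∈ S) (he : e ∈ S) : ∀ (L : List (F × F)) (W : F),
    (∀ p ∈ L, p.1 ∈ R ∧ p.2 ∈ R ⊓ S) → TF d e W L ∈ R ⊓ S
  | [], W, _ => one_mem _
  | p :: L, W, h => by
    rw [TF]
    obtain ⟨h1, h2⟩ := h p (List.mem_cons_self)
    exact mul_mem (conjL (ν_memRS hd he h1 (Subgroup.mem_inf.mp h2).1) W)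
      (TF_memRS hd he L _ fun q hq => h q (List.mem_cons_of_mem _ hq))

lemma TF_ab (hd : d ∈ S) (he : e ∈ S) : ∀ (L : List (F × F))
    (hL : ∀ p ∈ L, p.1 ∈ R ∧ p.2 ∈ R ⊓ S) (W : F) (hW : W ∈ R ⊓ S),
    fH R S (TF d e W L) (TF_memRS hd he L W hL)
      = fH R S ((L.map γF).prod) (Γ_mem L hL)
        * (gH R S e ((L.map γF).prod) (Γ_mem L hL))⁻¹
  | [], hL, W, hW => by
    have h0 : fH R S (TF d e W []) (TF_memRS hd he [] W hL) = 1 := fH_one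
    have h1 : fH R S (([] : List (F × F)).map γF).prod (Γ_mem [] hL) = 1 := fH_one
    have h2 : gH R S e (([] : List (F × F)).map γF).prod (Γ_mem [] hL) = 1 := gH_one e
    rw [h0, h1, h2, inv_one, mul_one]
  | q :: L, hL, W, hW => by
    obtain ⟨h1, h2⟩ := hL q (List.mem_cons_self)
    have h2R := (Subgroup.mem_inf.mp h2).1
    have hL' : ∀ p ∈ L, p.1 ∈ R ∧ p.2 ∈ R ⊓ S :=
      fun p hp => hL p (List.mem_cons_of_mem _ hp)
    have hν : νW d e q ∈ R ⊓ S := ν_memRS hd he h1 h2R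
    have hTF' : TF d e (W * cW d e q) L ∈ R ⊓ S := TF_memRS hd he L _ hL'
    have hγ : γF q ∈ R ⊓ S := γ_mem h1 h2
    have hΓ' : (L.map γF).prod ∈ R ⊓ S := Γ_mem L hL'
    have e0 : fH R S (TF d e W (q :: L)) (TF_memRS hd he (q :: L) W hL)
        = fH R S (W * νW d e q * W⁻¹) (mul_mem (mul_mem hW hν) (inv_mem hW))
          * fH R S (TF d e (W * cW d e q) L) hTF' := by
      rw [fH_eq (R := R) (S := S) (show TF d e W (q :: L)
        = (W * νW d e q * W⁻¹) * TF d e (W * cW d e q) L from by rw [TF])]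
      exact fH_mul' _ _ _
    rw [e0, fH_conj' hW hν _,
      TF_ab hd he L hL' (W * cW d e q) (mul_mem hW (c_memRS hd he h2R))]
    have e1 : fH R S (νW d e q) hν
        = fH R S (pcomm q.1 q.2) hγ * (gH R S e (pcomm q.1 q.2) hγ)⁻¹ :=
      phi_nu hd he h1 h2 hν hγ
    rw [e1]
    have e2 : fH R S (((q :: L).map γF).prod) (Γ_mem (q :: L) hL)
        = fH R S (γF q) hγ * fH R S ((L.map γF).prod) hΓ' := by
      rw [fH_eq (show ((q :: L).map γF).prod = γF q * (L.map γF).prod by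
        rw [List.map_cons, List.prod_cons])]
      exact fH_mul' _ _ _
    have e3 : gH R S e (((q :: L).map γF).prod) (Γ_mem (q :: L) hL)
        = gH R S e (γF q) hγ * gH R S e ((L.map γF).prod) hΓ' := by
      rw [gH_eq (R := R) (S := S) (e := e) (show ((q :: L).map γF).prod
        = γF q * (L.map γF).prod by rw [List.map_cons, List.prod_cons])]
      exact gH_mul e _ _ _
    rw [e2, e3, mul_inv_rev]
    show fH R S (γF q) hγ * (gH R S e (γF q) hγ)⁻¹
        * (fH R S ((L.map γF).prod) hΓ' * (gH R S e ((L.map γF).prod) hΓ')⁻¹) = _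
    generalize fH R S (γF q) hγ = a
    generalize gH R S e (γF q) hγ = b
    generalize fH R S ((L.map γF).prod) hΓ' = c
    generalize gH R S e ((L.map γF).prod) hΓ' = dd
    simp [mul_comm, mul_left_comm, mul_assoc]

end TFab
section Comm

variable {R S : Subgroup F} [R.Normal] [S.Normal]

set_option maxHeartbeats 1000000 in
lemma commId (g h : F) : o (g * h * g⁻¹ * h⁻¹) - 1
    = ((o g - 1) * (o h - 1) - (o h - 1) * (o g - 1)) * o (g⁻¹ * h⁻¹) := by
  simp only [mul_sub, sub_mul, one_mul, mul_one, ← o_mul]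
  simp only [mul_assoc, inv_mul_cancel_left, mul_inv_cancel_left, inv_mul_cancel,
    mul_inv_cancel, o_one, mul_one, one_mul]
  abel

/-- the subgroup of `R ⊓ S` determined by `JJ` -/
noncomputable def KJ (R S : Subgroup F) [R.Normal] [S.Normal] : Subgroup ↥(R ⊓ S) where
  carrier := {x | o (x : F) - 1 ∈ JJ R S}
  one_mem' := by
    simp only [Set.mem_setOf_eq, OneMemClass.coe_one, o_one, sub_self]
    exact zero_mem _
  mul_mem' := by
    intro x y hx hy
    simp only [Set.mem_setOf_eq] at *
    have hid : o ((x * y : ↥(R ⊓ S)) : F) - 1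
        = o (x : F) * (o (y : F) - 1) + (o (x : F) - 1) := by
      rw [Subgroup.coe_mul, o_mul]; noncomm_ring
    rw [hid]
    exact add_mem (og_mul_JJ hy _) hx
  inv_mem' := by
    intro x hx
    simp only [Set.mem_setOf_eq] at *
    have hid : o ((x⁻¹ : ↥(R ⊓ S)) : F) - 1
        = -(o ((x : F))⁻¹ * (o (x : F) - 1)) := by
      rw [Subgroup.coe_inv, inv_sub, neg_neg]
    rw [hid]
    exact neg_mem (og_mul_JJ hx _)

open scoped commutatorElement in
lemma comm_sub_one_mem {T : F} (hT : T ∈ R ⊓ S) (h1 : fH R S T hT = 1) :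
    o T - 1 ∈ JJ R S := by
  have hcomm : (⟨T, hT⟩ : ↥(R ⊓ S)) ∈ commutator ↥(R ⊓ S) :=
    (QuotientGroup.eq_one_iff _).mp h1
  have hle : commutator ↥(R ⊓ S) ≤ KJ R S := by
    rw [commutator_def, Subgroup.commutator_le]
    intro g1 _ g2 _
    show o ((⁅g1, g2⁆ : ↥(R ⊓ S)) : F) - 1 ∈ JJ R S
    have hco : ((⁅g1, g2⁆ : ↥(R ⊓ S)) : F)
        = (g1 : F) * (g2 : F) * (g1 : F)⁻¹ * (g2 : F)⁻¹ := rfl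
    rw [hco, commId]
    refine JJ_mul (sub_mem ?_ ?_) _
    · exact AB_le_JJ (mem_AB (Subgroup.mem_inf.mp g1.2).1 (Subgroup.mem_inf.mp g2.2).2)
    · exact AB_le_JJ (mem_AB (Subgroup.mem_inf.mp g2.2).1 (Subgroup.mem_inf.mp g1.2).2)
  exact hle hcomm

end Comm
end PropW

/-- Proposition in Section 4: if `rᵢ ∈ R`, `tᵢ ∈ R ∩ S` satisfy
`∏ᵢ [rᵢ,tᵢ] = 1`, then for any `d, e ∈ S` the element `w = ∏ᵢ [[rᵢ⁻¹,d],[tᵢ,e]]`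
satisfies `w - 1 ∈ Δ(R)Δ(S)Δ(F)`. -/
theorem prop_w (F : Type) [Group F] [IsFreeGroup F]
    (R S : Subgroup F) [R.Normal] [S.Normal]
    (k : ℕ) (r t : Fin k → F)
    (hr : ∀ i, r i ∈ R) (ht : ∀ i, t i ∈ R ⊓ S)
    (hprod : (List.ofFn fun i => pcomm (r i) (t i)).prod = 1)
    (d e : F) (hd : d ∈ S) (he : e ∈ S) :
    (MonoidAlgebra.of ℤ F ((List.ofFn fun i => pcomm (pcomm (r i)⁻¹ d) (pcomm (t i) e)).prod))
      - 1 ∈ aug R * aug S * aug (⊤ : Subgroup F) := by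
  classical
  set L : List (F × F) := List.ofFn (fun i => (r i, t i)) with hLdef
  have hL : ∀ p ∈ L, p.1 ∈ R ∧ p.2 ∈ R ⊓ S := by
    intro p hp
    rw [hLdef, List.mem_ofFn] at hp
    obtain ⟨i, hi⟩ := hp
    rw [← hi]
    exact ⟨hr i, ht i⟩
  have hmapc : (List.ofFn fun i => pcomm (pcomm (r i)⁻¹ d) (pcomm (t i) e))
      = L.map (PropW.cW d e) := by
    rw [hLdef, List.map_ofFn]; rfl
  have hmapγ : (List.ofFn fun i => pcomm (r i) (t i)) = L.map PropW.γF := by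
    rw [hLdef, List.map_ofFn]; rfl
  have hΓ1 : (L.map PropW.γF).prod = 1 := by rw [← hmapγ]; exact hprod
  have hmain := PropW.MAIN (R := R) (S := S) hd he L 1 (one_mem S) hL
  rw [PropW.o_one, one_mul] at hmain
  have hT : PropW.TF d e 1 L ∈ R ⊓ S := PropW.TF_memRS hd he L 1 hL
  have hab := PropW.TF_ab hd he L hL 1 (one_mem _)
  have habΓ : PropW.fH R S ((L.map PropW.γF).prod) (PropW.Γ_mem L hL) = 1 := by
    rw [PropW.fH_eq hΓ1]; exact PropW.fH_one
  have habgΓ : PropW.gH R S e ((L.map PropW.γF).prod) (PropW.Γ_mem L hL) = 1 := by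
    rw [PropW.gH_eq (R := R) (S := S) (e := e) hΓ1]; exact PropW.gH_one e
  rw [habΓ, habgΓ, inv_one, mul_one] at hab
  have hT1 : PropW.fH R S (PropW.TF d e 1 L) hT = 1 := hab
  have hJJ : PropW.o (PropW.TF d e 1 L) - 1 ∈ PropW.JJ R S :=
    PropW.comm_sub_one_mem hT hT1
  have hMM2 : (PropW.o (PropW.TF d e 1 L) - 1) * (PropW.o d - 1) ∈ PropW.MM R S :=
    PropW.JJ_mul_sub_one hJJ d
  rw [hmapc]
  have hfin := add_mem hmain hMM2
  rwa [sub_add_cancel] at hfin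
end
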